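/- Let Q be a real symmetric positive definite n×n matrix and A a real n×n matrix with QA + AᵀQ = 0. Then the matrix I - (1/2)A is invertible, and the first diagonal Padé approximant R₁(A) = (I - (1/2)A)⁻¹(I + (1/2)A) satisfies R₁(A)ᵀ Q R₁(A) = Q. -/

import Mathlib

open Matrix

/-- For `Q` symmetric positive definite and `QA + AᵀQ = 0`, the matrix
`I - (1/2)A` is invertible and `R₁(A) = (I - A/2)⁻¹ (I + A/2)` satisfies
`R₁(A)ᵀ Q R₁(A) = Q`. -/
theorem stmt4 {n : ℕ} (Q A : Matrix (Fin n) (Fin n) ℝ)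
    (hQ : Q.PosDef) (hA : Q * A + Aᵀ * Q = 0) :
    IsUnit (1 - (1/2 : ℝ) • A) ∧
    ((1 - (1/2 : ℝ) • A)⁻¹ * (1 + (1/2 : ℝ) • A))ᵀ * Q *
      ((1 - (1/2 : ℝ) • A)⁻¹ * (1 + (1/2 : ℝ) • A)) = Q := by
  set B : Matrix (Fin n) (Fin n) ℝ := 1 - (1/2 : ℝ) • A with hBdef
  set C : Matrix (Fin n) (Fin n) ℝ := 1 + (1/2 : ℝ) • A with hCdef
  have hQsymm : Qᵀ = Q := hQ.1
  have hAQ : Aᵀ * Q = -(Q * A) := eq_neg_of_add_eq_zero_right hA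
  have hskew : (Q * A)ᵀ = -(Q * A) := by
    rw [transpose_mul, hQsymm, hAQ]
  -- antisymmetric quadratic form vanishes
  have hform : ∀ v : Fin n → ℝ, v ⬝ᵥ ((Q * A) *ᵥ v) = 0 := by
    intro v
    have h1 : v ⬝ᵥ ((Q * A) *ᵥ v) = -(v ⬝ᵥ ((Q * A) *ᵥ v)) := by
      conv_lhs => rw [dotProduct_mulVec, ← mulVec_transpose, hskew, neg_mulVec,
        neg_dotProduct, dotProduct_comm]
    linarith
  -- invertibility
  have hBu : IsUnit B := by
    rw [Matrix.isUnit_iff_isUnit_det, isUnit_iff_ne_zero]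
    intro hdet
    obtain ⟨v, hv, hBv⟩ := (Matrix.exists_mulVec_eq_zero_iff).2 hdet
    have hveq : v = (1/2 : ℝ) • (A *ᵥ v) := by
      have := hBv
      rw [hBdef, sub_mulVec, one_mulVec, smul_mulVec, sub_eq_zero] at this
      exact this
    have hpos : 0 < v ⬝ᵥ (Q *ᵥ v) := by
      have := hQ.dotProduct_mulVec_pos hv
      simpa using this
    have hQv : Q *ᵥ v = (1/2 : ℝ) • ((Q * A) *ᵥ v) := by
      conv_lhs => rw [hveq]
      rw [mulVec_smul, mulVec_mulVec]
    have hzero : v ⬝ᵥ (Q *ᵥ v) = 0 := by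
      rw [hQv, dotProduct_smul, hform, smul_zero]
    linarith
  refine ⟨hBu, ?_⟩
  have hdetB : IsUnit B.det := (Matrix.isUnit_iff_isUnit_det B).1 hBu
  have hBiB : B⁻¹ * B = 1 := nonsing_inv_mul B hdetB
  have hBBi : B * B⁻¹ = 1 := mul_nonsing_inv B hdetB
  -- key identity
  have key : Bᵀ * Q * B = Cᵀ * Q * C := by
    rw [hBdef, hCdef]
    simp only [transpose_sub, transpose_add, transpose_smul, transpose_one,
      sub_mul, mul_sub, add_mul, mul_add, one_mul, mul_one,
      smul_mul_assoc, mul_smul_comm, hAQ]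
    module
  -- B and C commute
  have hBC : B * C = C * B := by
    rw [hBdef, hCdef]
    simp only [sub_mul, mul_sub, add_mul, mul_add, one_mul, mul_one,
      smul_mul_assoc, mul_smul_comm]
    module
  have hBiC : B⁻¹ * C = C * B⁻¹ := by
    calc B⁻¹ * C = B⁻¹ * C * (B * B⁻¹) := by rw [hBBi, mul_one]
      _ = B⁻¹ * (C * B) * B⁻¹ := by noncomm_ring
      _ = B⁻¹ * (B * C) * B⁻¹ := by rw [hBC]
      _ = (B⁻¹ * B) * C * B⁻¹ := by noncomm_ring
      _ = C * B⁻¹ := by rw [hBiB, one_mul]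
  have hBiCB : B⁻¹ * C * B = C := by
    rw [hBiC, mul_assoc, hBiB, mul_one]
  -- finish
  set M : Matrix (Fin n) (Fin n) ℝ := (B⁻¹ * C)ᵀ * Q * (B⁻¹ * C) with hMdef
  have hmain : Bᵀ * (M * B) = Bᵀ * (Q * B) := by
    have : Bᵀ * (M * B) = (B⁻¹ * C * B)ᵀ * Q * (B⁻¹ * C * B) := by
      rw [hMdef]
      simp only [transpose_mul]
      noncomm_ring
    rw [this, hBiCB, ← key, mul_assoc]
  have hBtu : IsUnit Bᵀ := by
    rw [Matrix.isUnit_iff_isUnit_det, det_transpose]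
    exact hdetB
  have h2 : M * B = Q * B := hBtu.mul_left_cancel hmain
  exact hBu.mul_right_cancel h2
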